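/- arXiv:2506.11362 — 2 statements merged into one kernel-verified Lean document; each statement's English description precedes it below -/
import Mathlib

section
/- Let n be a finite-dimensional nilpotent Lie algebra over a field. For every U ∈ n and every derivation D of n, tr((ad U) ∘ D) = 0. -/
lemma lieDeriv_mem_lcs {K : Type*} [Field K] {n : Type*} [LieRing n] [LieAlgebra K n]
    (D : LieDerivation K n n) (k : ℕ) {x : n} (hx : x ∈ LieModule.lowerCentralSeries K n n k) :
    D x ∈ LieModule.lowerCentralSeries K n n k := by
  induction k generalizing x with
  | zero => simp
  | succ k ih =>
    rw [LieModule.lowerCentralSeries_succ] at hx ⊢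
    rw [← LieSubmodule.mem_toSubmodule, LieSubmodule.lieIdeal_oper_eq_linear_span'] at hx
    induction hx using Submodule.span_induction with
    | mem y hy =>
      obtain ⟨a, -, b, hb, rfl⟩ := hy
      rw [D.apply_lie_eq_add]
      exact add_mem (LieSubmodule.lie_mem_lie (LieSubmodule.mem_top _) (ih hb))
        (LieSubmodule.lie_mem_lie (LieSubmodule.mem_top _) hb)
    | zero => simp
    | add y z _ _ hy hz => rw [map_add]; exact add_mem hy hz
    | smul c y _ hy => rw [map_smul]; exact Submodule.smul_mem _ _ hy

/-- In a finite-dimensional nilpotent Lie algebra, `tr((ad U) ∘ D) = 0`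
for every `U` and every derivation `D`. -/
theorem stmt3 {K : Type*} [Field K] {n : Type*} [LieRing n] [LieAlgebra K n]
    [FiniteDimensional K n] [LieRing.IsNilpotent n]
    (U : n) (D : LieDerivation K n n) :
    LinearMap.trace K n ((LieAlgebra.ad K n U) ∘ₗ D.toLinearMap) = 0 := by
  set f := (LieAlgebra.ad K n U) ∘ₗ D.toLinearMap with hf
  have key : ∀ (k : ℕ) (x : n), (f ^ k) x ∈ LieModule.lowerCentralSeries K n n k := by
    intro k
    induction k with
    | zero => simp
    | succ k ih =>
      intro x
      rw [pow_succ', Module.End.mul_apply]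
      have h1 : D (f ^ k <| x) ∈ LieModule.lowerCentralSeries K n n k := lieDeriv_mem_lcs D k (ih x)
      rw [LieModule.lowerCentralSeries_succ]
      exact LieSubmodule.lie_mem_lie (LieSubmodule.mem_top _) h1
  obtain ⟨k, hk⟩ := LieModule.IsNilpotent.nilpotent K n n
  have hnil : IsNilpotent f := by
    refine ⟨k, ?_⟩
    ext x
    have := key k x
    rw [hk] at this
    simpa using this
  have := LinearMap.isNilpotent_trace_of_isNilpotent hnil
  exact this.eq_zero
end

section
/- Let n be a finite-dimensional nilpotent Lie algebra over ℝ, let T : n → n be an invertible linear map preserving every term nⁱ of the lower central series, let Y ∈ n, and let P be a polynomial with constant coefficient 1. Then there exists U ∈ n such that T(U) + P(ad U)(Y) = 0. -/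
open LieModule LieAlgebra Polynomial in
private lemma stmt8_pow_mem_aux {n : Type*} [LieRing n] [LieAlgebra ℝ n]
    (i : ℕ) (U δ : n) (hδ : δ ∈ lowerCentralSeries ℝ n n i) (Y : n) :
    ∀ m : ℕ, ((ad ℝ n (U + δ)) ^ m) Y - ((ad ℝ n U) ^ m) Y ∈ lowerCentralSeries ℝ n n (i + 1) := by
  intro m
  induction m with
  | zero => simp
  | succ m ih =>
    have h1 : ((ad ℝ n (U + δ)) ^ (m+1)) Y - ((ad ℝ n U) ^ (m+1)) Y
        = ⁅U + δ, ((ad ℝ n (U + δ)) ^ m) Y - ((ad ℝ n U) ^ m) Y⁆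
          + ⁅δ, ((ad ℝ n U) ^ m) Y⁆ := by
      simp [pow_succ', Module.End.mul_apply, ad_apply, lie_sub, add_lie]
      abel
    rw [h1]
    refine add_mem (LieSubmodule.lie_mem _ ih) ?_
    rw [show (⁅δ, ((ad ℝ n U) ^ m) Y⁆ : n) = -⁅((ad ℝ n U) ^ m) Y, δ⁆ by rw [lie_skew]]
    refine neg_mem ?_
    rw [LieModule.lowerCentralSeries_succ]
    exact LieSubmodule.lie_mem_lie (LieSubmodule.mem_top _) hδ

open LieModule LieAlgebra Polynomial in
private lemma stmt8_aeval_mem_aux {n : Type*} [LieRing n] [LieAlgebra ℝ n]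
    (i : ℕ) (U δ : n) (hδ : δ ∈ lowerCentralSeries ℝ n n i) (Y : n)
    (P : Polynomial ℝ) :
    (aeval (ad ℝ n (U + δ)) P) Y - (aeval (ad ℝ n U) P) Y ∈ lowerCentralSeries ℝ n n (i + 1) := by
  induction P using Polynomial.induction_on' with
  | add p q hp hq =>
    simp only [map_add, LinearMap.add_apply] at hp hq ⊢
    have := add_mem hp hq
    convert this using 1; abel
  | monomial m a =>
    simp only [aeval_monomial, Module.End.mul_apply, Algebra.algebraMap_eq_smul_one,
      LinearMap.smul_apply, Module.End.one_apply, Module.End.smul_def]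
    rw [← smul_sub]
    exact SMulMemClass.smul_mem a (stmt8_pow_mem_aux i U δ hδ Y m)

/-- In a finite-dimensional nilpotent real Lie algebra, if `T` is an
invertible linear map preserving every term of the lower central series, `Y ∈ n`, and
`P` is a polynomial with constant coefficient `1`, then `T U + P(ad U) Y = 0` has a
solution `U`. -/
theorem stmt8 {n : Type*} [LieRing n] [LieAlgebra ℝ n] [FiniteDimensional ℝ n]
    [LieRing.IsNilpotent n]
    (T : n →ₗ[ℝ] n) (hT : Function.Bijective T)
    (hTfil : ∀ i : ℕ, ∀ x ∈ LieModule.lowerCentralSeries ℝ n n i,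
      T x ∈ LieModule.lowerCentralSeries ℝ n n i)
    (Y : n) (P : Polynomial ℝ) (hP : P.coeff 0 = 1) :
    ∃ U : n, T U + (Polynomial.aeval (LieAlgebra.ad ℝ n U) P) Y = 0 := by
  open LieModule LieAlgebra Polynomial in
  have key : ∀ i : ℕ, ∃ U : n,
      T U + (aeval (ad ℝ n U) P) Y ∈ lowerCentralSeries ℝ n n i := by
    intro i
    induction i with
    | zero => exact ⟨0, by simp⟩
    | succ i ih =>
      obtain ⟨U, hU⟩ := ih
      set S : Submodule ℝ n := (LieModule.lowerCentralSeries ℝ n n i : Submodule ℝ n) with hS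
      have hrestr : ∀ x ∈ S, T x ∈ S := fun x hx => hTfil i x hx
      let f : S →ₗ[ℝ] S := T.restrict hrestr
      have hf : Function.Injective f := fun a b hab => by
        apply Subtype.ext
        exact hT.1 (by simpa [f, LinearMap.restrict_apply, Subtype.ext_iff] using hab)
      have hfs : Function.Surjective f := (LinearMap.injective_iff_surjective).mp hf
      obtain ⟨w, hw⟩ := hfs ⟨T U + (Polynomial.aeval (LieAlgebra.ad ℝ n U) P) Y, hU⟩
      have hwval : T (w : n) = T U + (Polynomial.aeval (LieAlgebra.ad ℝ n U) P) Y := by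
        have := congrArg (Subtype.val) hw
        simpa [f, LinearMap.restrict_apply] using this
      refine ⟨U + (-(w : n)), ?_⟩
      have hδ : (-(w : n)) ∈ LieModule.lowerCentralSeries ℝ n n i := neg_mem w.2
      have h2 := stmt8_aeval_mem_aux i U (-(w : n)) hδ Y P
      have heq : T (U + (-(w : n))) + (Polynomial.aeval (LieAlgebra.ad ℝ n (U + (-(w : n)))) P) Y
          = (Polynomial.aeval (LieAlgebra.ad ℝ n (U + (-(w : n)))) P) Y
            - (Polynomial.aeval (LieAlgebra.ad ℝ n U) P) Y := by
        rw [map_add, map_neg, hwval]; abel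
      rw [heq]; exact h2
  obtain ⟨k, hk⟩ := LieModule.IsNilpotent.nilpotent ℝ n n
  obtain ⟨U, hU⟩ := key k
  rw [hk] at hU
  exact ⟨U, by simpa using hU⟩
end
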